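/- arXiv:1908.10393 — 2 statements merged into one kernel-verified Lean document; each statement's English description precedes it below -/
import Mathlib

section
/- Assume ρ is a unital measuring (conditions (1)–(4)) and σ:H×H→A is a k-bilinear map that is H^R-balanced (σ(hr,k)=σ(h,rk) for all r∈H^R) and satisfies conditions (6) and (9). Then σ(h,k) = σ(h⁽¹⁾,k⁽¹⁾)(h⁽²⁾k⁽²⁾·1_A) for all h,k ∈ H. -/
open scoped TensorProduct

/-- The data of a weak bialgebra structure (together with an antipode and its
inverse) on a `k`-algebra `H`: a comultiplication `Δ`, a counit `ε`, an
antipode `S` and its inverse `Sinv`. -/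
structure WeakHopfData (k H : Type*) [Field k] [Ring H] [Algebra k H] where
  Δ : H →ₗ[k] H ⊗[k] H
  ε : H →ₗ[k] k
  S : H →ₗ[k] H
  Sinv : H →ₗ[k] H

section

variable {k H A : Type*} [Field k] [Ring H] [Algebra k H] [Ring A] [Algebra k A]

/-- `Π^L(h) = ε(1⁽¹⁾h)1⁽²⁾`. -/
noncomputable def piL (W : WeakHopfData k H) (h : H) : H :=
  (TensorProduct.lid k H) ((LinearMap.rTensor H (W.ε ∘ₗ LinearMap.mulRight k h)) (W.Δ 1))

/-- `Π^R(h) = 1⁽¹⁾ε(h1⁽²⁾)`. -/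
noncomputable def piR (W : WeakHopfData k H) (h : H) : H :=
  (TensorProduct.rid k H) ((LinearMap.lTensor H (W.ε ∘ₗ LinearMap.mulLeft k h)) (W.Δ 1))

/-- `H^L = im(Π^L)`. -/
def HL (W : WeakHopfData k H) : Set H := Set.range (piL W)

/-- `H^R = im(Π^R)`. -/
def HR (W : WeakHopfData k H) : Set H := Set.range (piR W)

/-- The axioms of a weak Hopf algebra with bijective antipode, where Sweedler
sums are expressed via arbitrary finite representations of the comultiplication. -/
structure IsWeakHopf (W : WeakHopfData k H) : Prop where
  coassoc : ∀ h : H,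
    (TensorProduct.assoc k H H H) ((LinearMap.rTensor H W.Δ) (W.Δ h)) =
      (LinearMap.lTensor H W.Δ) (W.Δ h)
  counit_left : ∀ h : H, (TensorProduct.lid k H) ((LinearMap.rTensor H W.ε) (W.Δ h)) = h
  counit_right : ∀ h : H, (TensorProduct.rid k H) ((LinearMap.lTensor H W.ε) (W.Δ h)) = h
  comul_mul : ∀ h l : H, W.Δ (h * l) = W.Δ h * W.Δ l
  weak_comul_one₁ : (LinearMap.lTensor H W.Δ) (W.Δ 1) =
    (TensorProduct.assoc k H H H) (W.Δ 1 ⊗ₜ[k] (1 : H)) * ((1 : H) ⊗ₜ[k] W.Δ 1)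
  weak_comul_one₂ : (LinearMap.lTensor H W.Δ) (W.Δ 1) =
    ((1 : H) ⊗ₜ[k] W.Δ 1) * (TensorProduct.assoc k H H H) (W.Δ 1 ⊗ₜ[k] (1 : H))
  weak_counit : ∀ h l m : H, ∀ (n : ℕ) (x y : Fin n → H),
    W.Δ l = ∑ i, x i ⊗ₜ[k] y i →
      W.ε (h * l * m) = ∑ i, W.ε (h * x i) * W.ε (y i * m) ∧
      W.ε (h * l * m) = ∑ i, W.ε (h * y i) * W.ε (x i * m)
  antipode_left : ∀ h : H, ∀ (n : ℕ) (x y : Fin n → H),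
    W.Δ h = ∑ i, x i ⊗ₜ[k] y i → ∑ i, x i * W.S (y i) = piL W h
  antipode_right : ∀ h : H, ∀ (n : ℕ) (x y : Fin n → H),
    W.Δ h = ∑ i, x i ⊗ₜ[k] y i → ∑ i, W.S (x i) * y i = piR W h
  antipode_mid : ∀ h : H, ∀ (n : ℕ) (x y : Fin n → H),
    W.Δ h = ∑ i, x i ⊗ₜ[k] y i →
      ∀ (m : Fin n → ℕ) (u v : (i : Fin n) → Fin (m i) → H),
        (∀ i, W.Δ (y i) = ∑ j, u i j ⊗ₜ[k] v i j) →
          ∑ i, ∑ j, W.S (x i) * u i j * W.S (v i j) = W.S h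
  S_Sinv : ∀ h : H, W.S (W.Sinv h) = h
  Sinv_S : ∀ h : H, W.Sinv (W.S h) = h

/-- Condition (1): `h·1_A = Π^L(h)·1_A`. -/
def cond1 (W : WeakHopfData k H) (ρ : H →ₗ[k] A →ₗ[k] A) : Prop :=
  ∀ h : H, ρ h 1 = ρ (piL W h) 1

/-- Condition (2): `h·(aa') = (h⁽¹⁾·a)(h⁽²⁾·a')`. -/
def cond2 (W : WeakHopfData k H) (ρ : H →ₗ[k] A →ₗ[k] A) : Prop :=
  ∀ (h : H) (a a' : A) (n : ℕ) (x y : Fin n → H),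
    W.Δ h = ∑ i, x i ⊗ₜ[k] y i → ρ h (a * a') = ∑ i, ρ (x i) a * ρ (y i) a'

/-- Condition (3): `S⁻¹(l)h·a = (h·a)(l·1_A)` and `lh·a = (l·1_A)(h·a)` for `l ∈ H^L`. -/
def cond3 (W : WeakHopfData k H) (ρ : H →ₗ[k] A →ₗ[k] A) : Prop :=
  ∀ (h : H) (a : A), ∀ l ∈ HL W,
    ρ (W.Sinv l * h) a = ρ h a * ρ l 1 ∧ ρ (l * h) a = ρ l 1 * ρ h a

/-- Condition (4): `1·a = a`. -/
def cond4 (ρ : H →ₗ[k] A →ₗ[k] A) : Prop := ∀ a : A, ρ 1 a = a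

/-- Condition (5). -/
def cond5 (W : WeakHopfData k H) (ρ : H →ₗ[k] A →ₗ[k] A) (σ : H → H → A) : Prop :=
  ∀ (h g : H), ∀ l ∈ HL W,
    σ (l * h) g = ρ l 1 * σ h g ∧ σ (W.Sinv l * h) g = σ h g * ρ l 1

/-- Condition (6): `(h⁽¹⁾·(l·1_A))σ(h⁽²⁾,k) = σ(h,lk)` for `l ∈ H^L`. -/
def cond6 (W : WeakHopfData k H) (ρ : H →ₗ[k] A →ₗ[k] A) (σ : H → H → A) : Prop :=
  ∀ (h g : H), ∀ l ∈ HL W, ∀ (n : ℕ) (x y : Fin n → H),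
    W.Δ h = ∑ i, x i ⊗ₜ[k] y i →
      ∑ i, ρ (x i) (ρ l 1) * σ (y i) g = σ h (l * g)

/-- Condition (7): `σ(1,h) = σ(h,1) = h·1_A`. -/
def cond7 (ρ : H →ₗ[k] A →ₗ[k] A) (σ : H → H → A) : Prop :=
  ∀ h : H, σ 1 h = ρ h 1 ∧ σ h 1 = ρ h 1

/-- Condition (8), the cocycle condition. -/
def cond8 (W : WeakHopfData k H) (ρ : H →ₗ[k] A →ₗ[k] A) (σ : H → H → A) : Prop :=
  ∀ (h g m : H) (n₁ : ℕ) (x₁ y₁ : Fin n₁ → H) (n₂ : ℕ) (x₂ y₂ : Fin n₂ → H)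
    (n₃ : ℕ) (x₃ y₃ : Fin n₃ → H),
    W.Δ h = ∑ i, x₁ i ⊗ₜ[k] y₁ i → W.Δ g = ∑ i, x₂ i ⊗ₜ[k] y₂ i →
    W.Δ m = ∑ i, x₃ i ⊗ₜ[k] y₃ i →
      ∑ i, ∑ j, ∑ p, ρ (x₁ i) (σ (x₂ j) (x₃ p)) * σ (y₁ i) (y₂ j * y₃ p) =
        ∑ i, ∑ j, σ (x₁ i) (x₂ j) * σ (y₁ i * y₂ j) m

/-- Condition (9), the twisted module condition. -/
def cond9 (W : WeakHopfData k H) (ρ : H →ₗ[k] A →ₗ[k] A) (σ : H → H → A) : Prop :=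
  ∀ (h g : H) (a : A) (n : ℕ) (x y : Fin n → H) (m : ℕ) (u v : Fin m → H),
    W.Δ h = ∑ i, x i ⊗ₜ[k] y i → W.Δ g = ∑ j, u j ⊗ₜ[k] v j →
      ∑ i, ∑ j, ρ (x i) (ρ (u j) a) * σ (y i) (v j) =
        ∑ i, ∑ j, σ (x i) (u j) * ρ (y i * v j) a

/-- Condition (10): `h·(l·1_A) = hl·1_A` for `l ∈ H^L`. -/
def cond10 (W : WeakHopfData k H) (ρ : H →ₗ[k] A →ₗ[k] A) : Prop :=
  ∀ h : H, ∀ l ∈ HL W, ρ h (ρ l 1) = ρ (h * l) 1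

/-- Condition (11): `h·(l·1_A) = hl·1_A` for all `h, l ∈ H`. -/
def cond11 (ρ : H →ₗ[k] A →ₗ[k] A) : Prop :=
  ∀ h l : H, ρ h (ρ l 1) = ρ (h * l) 1

/-- Condition (12): `σ(h,l) = σ(hl,1)` for `l ∈ H^L`. -/
def cond12 (W : WeakHopfData k H) (σ : H → H → A) : Prop :=
  ∀ h : H, ∀ l ∈ HL W, σ h l = σ (h * l) 1

/-- Condition (13). -/
def cond13 (W : WeakHopfData k H) (ρ : H →ₗ[k] A →ₗ[k] A) (σbar : H → H → A) : Prop :=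
  ∀ (h g : H) (n : ℕ) (x y : Fin n → H) (m : ℕ) (u v : Fin m → H),
    W.Δ h = ∑ i, x i ⊗ₜ[k] y i → W.Δ g = ∑ j, u j ⊗ₜ[k] v j →
      σbar h g = ∑ i, ∑ j, ρ (x i * u j) 1 * σbar (y i) (v j)

/-- Condition (14). -/
def cond14 (W : WeakHopfData k H) (ρ : H →ₗ[k] A →ₗ[k] A) (σbar : H → H → A) : Prop :=
  ∀ (h g : H), ∀ l ∈ HL W,
    σbar (l * h) g = ρ l 1 * σbar h g ∧ σbar (W.Sinv l * h) g = σbar h g * ρ l 1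

/-- Condition (15). -/
def cond15 (W : WeakHopfData k H) (ρ : H →ₗ[k] A →ₗ[k] A) (σbar : H → H → A) : Prop :=
  ∀ (h g : H), ∀ l ∈ HL W, ∀ (n : ℕ) (x y : Fin n → H),
    W.Δ h = ∑ i, x i ⊗ₜ[k] y i →
      ∑ i, σbar (x i) g * ρ (y i) (ρ l 1) = σbar h (W.Sinv l * g)

/-- Condition (16). -/
def cond16 (W : WeakHopfData k H) (ρ : H →ₗ[k] A →ₗ[k] A) (σ σbar : H → H → A) : Prop :=
  ∀ (h g : H) (n : ℕ) (x y : Fin n → H) (m : ℕ) (u v : Fin m → H),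
    W.Δ h = ∑ i, x i ⊗ₜ[k] y i → W.Δ g = ∑ j, u j ⊗ₜ[k] v j →
      (∑ i, ∑ j, σ (x i) (u j) * σbar (y i) (v j) = ρ h (ρ g 1)) ∧
      (∑ i, ∑ j, σbar (x i) (u j) * σ (y i) (v j) = ρ (h * g) 1)

/-- Condition (17), the cocycle condition for `ς : H ⊗ H → A`. -/
def cond17 (W : WeakHopfData k H) (ρ : H →ₗ[k] A →ₗ[k] A) (ς : H ⊗[k] H → A) : Prop :=
  ∀ (h g m : H) (n₁ : ℕ) (x₁ y₁ : Fin n₁ → H) (n₂ : ℕ) (x₂ y₂ : Fin n₂ → H)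
    (n₃ : ℕ) (x₃ y₃ : Fin n₃ → H),
    W.Δ h = ∑ i, x₁ i ⊗ₜ[k] y₁ i → W.Δ g = ∑ i, x₂ i ⊗ₜ[k] y₂ i →
    W.Δ m = ∑ i, x₃ i ⊗ₜ[k] y₃ i →
      ∑ i, ∑ j, ∑ p, ρ (x₁ i) (ς (x₂ j ⊗ₜ[k] x₃ p)) * ς (y₁ i ⊗ₜ[k] (y₂ j * y₃ p)) =
        ∑ i, ∑ j, ς (x₁ i ⊗ₜ[k] x₂ j) * ς ((y₁ i * y₂ j) ⊗ₜ[k] m)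

/-- Condition (18), the twisted module condition for `ς : H ⊗ H → A`. -/
def cond18 (W : WeakHopfData k H) (ρ : H →ₗ[k] A →ₗ[k] A) (ς : H ⊗[k] H → A) : Prop :=
  ∀ (h g : H) (a : A) (n : ℕ) (x y : Fin n → H) (m : ℕ) (u v : Fin m → H),
    W.Δ h = ∑ i, x i ⊗ₜ[k] y i → W.Δ g = ∑ j, u j ⊗ₜ[k] v j →
      ∑ i, ∑ j, ρ (x i) (ρ (u j) a) * ς (y i ⊗ₜ[k] v j) =
        ∑ i, ∑ j, ς (x i ⊗ₜ[k] u j) * ρ (y i * v j) a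

/-- Condition (19). -/
def cond19 (W : WeakHopfData k H) (ρ : H →ₗ[k] A →ₗ[k] A) (ς : H ⊗[k] H → A) : Prop :=
  ∀ (h g : H) (n : ℕ) (x y : Fin n → H) (m : ℕ) (u v : Fin m → H),
    W.Δ h = ∑ i, x i ⊗ₜ[k] y i → W.Δ g = ∑ j, u j ⊗ₜ[k] v j →
      ς (h ⊗ₜ[k] g) = ∑ i, ∑ j, ς (x i ⊗ₜ[k] u j) * ρ (y i * v j) 1

/-- Condition (20). -/
def cond20 (W : WeakHopfData k H) (ρ : H →ₗ[k] A →ₗ[k] A) (ς : H ⊗[k] H → A) : Prop :=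
  ∀ (h : H) (n : ℕ) (x y : Fin n → H) (m : ℕ) (u v : Fin m → H),
    W.Δ h = ∑ i, x i ⊗ₜ[k] y i → W.Δ 1 = ∑ j, u j ⊗ₜ[k] v j →
      ρ h 1 = ∑ i, ∑ j, ρ (x i) (ρ (u j) 1) * ς (y i ⊗ₜ[k] v j)

/-- Condition (21). -/
def cond21 (W : WeakHopfData k H) (ρ : H →ₗ[k] A →ₗ[k] A) (ς : H ⊗[k] H → A) : Prop :=
  ∀ (h : H) (m : ℕ) (u v : Fin m → H),
    W.Δ 1 = ∑ j, u j ⊗ₜ[k] v j →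
      ρ h 1 = ∑ j, ρ (u j) 1 * ς (v j ⊗ₜ[k] h)

/-- Condition (22): `a(1⁽¹⁾·1_A) ⊗ 1⁽²⁾ = (1⁽¹⁾·a) ⊗ 1⁽²⁾` in `A ⊗ H`. -/
def cond22 (W : WeakHopfData k H) (ρ : H →ₗ[k] A →ₗ[k] A) : Prop :=
  ∀ (a : A) (m : ℕ) (u v : Fin m → H),
    W.Δ 1 = ∑ j, u j ⊗ₜ[k] v j →
      (∑ j, (a * ρ (u j) 1) ⊗ₜ[k] v j) = ∑ j, (ρ (u j) a) ⊗ₜ[k] v j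

/-- Condition (23). -/
def cond23 (W : WeakHopfData k H) (ρ : H →ₗ[k] A →ₗ[k] A) (ςbar : H ⊗[k] H → A) : Prop :=
  ∀ (h g : H) (n : ℕ) (x y : Fin n → H) (m : ℕ) (u v : Fin m → H),
    W.Δ h = ∑ i, x i ⊗ₜ[k] y i → W.Δ g = ∑ j, u j ⊗ₜ[k] v j →
      ςbar (h ⊗ₜ[k] g) = ∑ i, ∑ j, ρ (x i * u j) 1 * ςbar (y i ⊗ₜ[k] v j)

/-- Condition (24). -/
def cond24 (W : WeakHopfData k H) (ρ : H →ₗ[k] A →ₗ[k] A) (ς ςbar : H ⊗[k] H → A) : Prop :=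
  ∀ (h g : H) (n : ℕ) (x y : Fin n → H) (m : ℕ) (u v : Fin m → H),
    W.Δ h = ∑ i, x i ⊗ₜ[k] y i → W.Δ g = ∑ j, u j ⊗ₜ[k] v j →
      (∑ i, ∑ j, ς (x i ⊗ₜ[k] u j) * ςbar (y i ⊗ₜ[k] v j) = ρ (h * g) 1) ∧
      (∑ i, ∑ j, ςbar (x i ⊗ₜ[k] u j) * ς (y i ⊗ₜ[k] v j) = ρ (h * g) 1)

/-- `σ` is `H^R`-balanced: `σ(hr,k) = σ(h,rk)` for `r ∈ H^R`. -/
def HRBalanced (W : WeakHopfData k H) (σ : H → H → A) : Prop :=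
  ∀ (h g : H), ∀ r ∈ HR W, σ (h * r) g = σ h (r * g)

/-- `σbar` is `H^L`-balanced: `σbar(hl,k) = σbar(h,lk)` for `l ∈ H^L`. -/
def HLBalanced (W : WeakHopfData k H) (σbar : H → H → A) : Prop :=
  ∀ (h g : H), ∀ l ∈ HL W, σbar (h * l) g = σbar h (l * g)

/-- The idempotent `∇ρ : A ⊗ H → A ⊗ H`, `a ⊗ h ↦ a(h⁽¹⁾·1_A) ⊗ h⁽²⁾`. -/
noncomputable def nabla (W : WeakHopfData k H) (ρ : H →ₗ[k] A →ₗ[k] A) :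
    A ⊗[k] H →ₗ[k] A ⊗[k] H :=
  (LinearMap.rTensor H (LinearMap.mul' k A ∘ₗ LinearMap.lTensor A (ρ.flip 1))) ∘ₗ
    (TensorProduct.assoc k A H H).symm.toLinearMap ∘ₗ LinearMap.lTensor A W.Δ

/-- The subspace `N` of `A ⊗ H` spanned by the elements
`a(l·1_A) ⊗ h - a ⊗ lh` with `l ∈ H^L`, so that `(A ⊗ H)/N = A ⊗_{H^L} H`. -/
def relN (W : WeakHopfData k H) (ρ : H →ₗ[k] A →ₗ[k] A) : Submodule k (A ⊗[k] H) :=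
  Submodule.span k
    {z | ∃ (a : A) (l h : H), l ∈ HL W ∧ z = (a * ρ l 1) ⊗ₜ[k] h - a ⊗ₜ[k] (l * h)}

/-- The map `σ̃(h,k) := (h⁽¹⁾k⁽¹⁾·1_A)σ̄(h⁽²⁾,k⁽²⁾)`. -/
noncomputable def sigmaTilde (W : WeakHopfData k H) (ρ : H →ₗ[k] A →ₗ[k] A)
    (σbar : H →ₗ[k] H →ₗ[k] A) : H → H → A := fun h g =>
  LinearMap.mul' k A
    ((TensorProduct.map ((ρ.flip 1) ∘ₗ LinearMap.mul' k H) (TensorProduct.lift σbar))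
      ((TensorProduct.tensorTensorTensorComm k H H H H) (W.Δ h ⊗ₜ[k] W.Δ g)))

end

/-- Every element of a tensor product is a finite sum of simple tensors,
indexed by a `Fin n`. -/
lemma exists_fin_rep {R M N : Type*} [CommSemiring R] [AddCommMonoid M] [AddCommMonoid N]
    [Module R M] [Module R N] (t : M ⊗[R] N) :
    ∃ (n : ℕ) (x : Fin n → M) (y : Fin n → N), t = ∑ i, x i ⊗ₜ[R] y i := by
  obtain ⟨S, hS⟩ := TensorProduct.exists_finset t
  refine ⟨S.card, fun i => (S.equivFin.symm i).1.1, fun i => (S.equivFin.symm i).1.2, ?_⟩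
  rw [hS, ← Finset.sum_coe_sort S, ← Equiv.sum_comp S.equivFin.symm]

/-- under conditions (1)–(4), (6) and (9), one has
`σ(h,k) = σ(h⁽¹⁾,k⁽¹⁾)(h⁽²⁾k⁽²⁾·1_A)`. -/
theorem statement1 {k H A : Type*} [Field k] [Ring H] [Algebra k H] [Ring A] [Algebra k A]
    (W : WeakHopfData k H) (hW : IsWeakHopf W) (ρ : H →ₗ[k] A →ₗ[k] A)
    (h1 : cond1 W ρ) (h2 : cond2 W ρ) (h3 : cond3 W ρ) (h4 : cond4 ρ)
    (σb : H →ₗ[k] H →ₗ[k] A)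
    (hbal : HRBalanced W (fun h g => σb h g))
    (h6 : cond6 W ρ (fun h g => σb h g)) (h9 : cond9 W ρ (fun h g => σb h g)) :
    ∀ (h g : H) (n : ℕ) (x y : Fin n → H) (m : ℕ) (u v : Fin m → H),
      W.Δ h = ∑ i, x i ⊗ₜ[k] y i → W.Δ g = ∑ j, u j ⊗ₜ[k] v j →
        σb h g = ∑ i, ∑ j, σb (x i) (u j) * ρ (y i * v j) 1 := by
  intro h g n x y m u v hh hg
  obtain ⟨p, e, f, h1d⟩ := exists_fin_rep (W.Δ (1 : H))
  -- formula for piL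
  have hpiL : ∀ z : H, piL W z = ∑ q, W.ε (e q * z) • f q := by
    intro z
    simp [piL, h1d, map_sum]
  -- Delta g expanded
  have hdg : W.Δ g = ∑ q, ∑ j, (e q * u j) ⊗ₜ[k] (f q * v j) := by
    have := hW.comul_mul 1 g
    rw [one_mul] at this
    rw [this, h1d, hg, Finset.sum_mul_sum]
    simp [Algebra.TensorProduct.tmul_mul_tmul]
  -- g = sum piL(u j) * v j
  have hgrep : g = ∑ j, piL W (u j) * v j := by
    have hc := hW.counit_left g
    rw [hdg] at hc
    simp only [map_sum, LinearMap.rTensor_tmul, TensorProduct.lid_tmul] at hc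
    rw [← hc, Finset.sum_comm]
    refine Finset.sum_congr rfl fun j _ => ?_
    rw [hpiL (u j), Finset.sum_mul]
    refine Finset.sum_congr rfl fun q _ => ?_
    rw [smul_mul_assoc]
  -- apply cond6
  calc σb h g = ∑ j, σb h (piL W (u j) * v j) := by
        conv_lhs => rw [hgrep]
        rw [map_sum]
    _ = ∑ j, ∑ i, ρ (x i) (ρ (piL W (u j)) 1) * σb (y i) (v j) := by
        refine Finset.sum_congr rfl fun j _ => ?_
        exact (h6 h (v j) (piL W (u j)) ⟨u j, rfl⟩ n x y hh).symm
    _ = ∑ i, ∑ j, ρ (x i) (ρ (u j) 1) * σb (y i) (v j) := by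
        rw [Finset.sum_comm]
        refine Finset.sum_congr rfl fun i _ => Finset.sum_congr rfl fun j _ => ?_
        rw [← h1 (u j)]
    _ = ∑ i, ∑ j, σb (x i) (u j) * ρ (y i * v j) 1 :=
        h9 h g 1 n x y m u v hh hg
end

section
/- Assume ρ is a unital measuring (conditions (1)–(4)) and σ:H×H→A is a k-bilinear H^R-balanced map. If σ̄ and σ̃ are two k-bilinear H^L-balanced maps H×H→A, each satisfying conditions (13)–(16) (i.e. each is an inverse of σ), then σ̄ = σ̃. In other words, the inverse of σ, if it exists, is unique. -/
open scoped TensorProduct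

section UniquenessAux
variable {k H A : Type*} [Field k] [Ring H] [Algebra k H] [Ring A] [Algebra k A]

theorem exists_rep {M N : Type*} [AddCommGroup M] [Module k M] [AddCommGroup N]
    [Module k N] (z : M ⊗[k] N) : ∃ (n : ℕ) (x : Fin n → M) (y : Fin n → N),
    z = ∑ i, x i ⊗ₜ[k] y i := by
  induction z using TensorProduct.induction_on with
  | zero => exact ⟨0, ![], ![], by simp⟩
  | tmul a b => exact ⟨1, ![a], ![b], by simp⟩
  | add u v hu hv =>
    obtain ⟨n, x, y, rfl⟩ := hu
    obtain ⟨m, u', v', rfl⟩ := hv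
    exact ⟨n + m, Fin.append x u', Fin.append y v', by
      rw [Fin.sum_univ_add]; simp [Fin.append]⟩

noncomputable def conv (W : WeakHopfData k H) (F G : H ⊗[k] H →ₗ[k] A) :
    H ⊗[k] H →ₗ[k] A :=
  (LinearMap.mul' k A) ∘ₗ (TensorProduct.map F G) ∘ₗ
    (TensorProduct.tensorTensorTensorComm k H H H H).toLinearMap ∘ₗ
    (TensorProduct.map W.Δ W.Δ)

theorem conv_tmul (W : WeakHopfData k H) (F G : H ⊗[k] H →ₗ[k] A) (h g : H)
    {n : ℕ} {x y : Fin n → H} {m : ℕ} {u v : Fin m → H}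
    (hh : W.Δ h = ∑ i, x i ⊗ₜ[k] y i) (hg : W.Δ g = ∑ j, u j ⊗ₜ[k] v j) :
    conv W F G (h ⊗ₜ[k] g) = ∑ i, ∑ j, F (x i ⊗ₜ[k] u j) * G (y i ⊗ₜ[k] v j) := by
  simp only [conv, LinearMap.comp_apply, TensorProduct.map_tmul, hh, hg,
    TensorProduct.sum_tmul, TensorProduct.tmul_sum, map_sum,
    LinearEquiv.coe_coe, TensorProduct.tensorTensorTensorComm_tmul,
    LinearMap.mul'_apply]
  exact Finset.sum_comm

noncomputable def theta (F G K : H ⊗[k] H →ₗ[k] A) :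
    ((H ⊗[k] H) ⊗[k] H) ⊗[k] ((H ⊗[k] H) ⊗[k] H) →ₗ[k] A :=
  (LinearMap.mul' k A) ∘ₗ
    (TensorProduct.map
      ((LinearMap.mul' k A) ∘ₗ (TensorProduct.map F G) ∘ₗ
        (TensorProduct.tensorTensorTensorComm k H H H H).toLinearMap) K) ∘ₗ
    (TensorProduct.tensorTensorTensorComm k (H ⊗[k] H) H (H ⊗[k] H) H).toLinearMap

noncomputable def theta' (F G K : H ⊗[k] H →ₗ[k] A) :
    (H ⊗[k] (H ⊗[k] H)) ⊗[k] (H ⊗[k] (H ⊗[k] H)) →ₗ[k] A :=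
  (LinearMap.mul' k A) ∘ₗ
    (TensorProduct.map F
      ((LinearMap.mul' k A) ∘ₗ (TensorProduct.map G K) ∘ₗ
        (TensorProduct.tensorTensorTensorComm k H H H H).toLinearMap)) ∘ₗ
    (TensorProduct.tensorTensorTensorComm k H (H ⊗[k] H) H (H ⊗[k] H)).toLinearMap

theorem theta_tmul (F G K : H ⊗[k] H →ₗ[k] A) (a b c d e f : H) :
    theta F G K (((a ⊗ₜ[k] b) ⊗ₜ[k] c) ⊗ₜ[k] ((d ⊗ₜ[k] e) ⊗ₜ[k] f)) =
      F (a ⊗ₜ[k] d) * G (b ⊗ₜ[k] e) * K (c ⊗ₜ[k] f) := by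
  simp [theta]

theorem theta'_tmul (F G K : H ⊗[k] H →ₗ[k] A) (a b c d e f : H) :
    theta' F G K ((a ⊗ₜ[k] (b ⊗ₜ[k] c)) ⊗ₜ[k] (d ⊗ₜ[k] (e ⊗ₜ[k] f))) =
      F (a ⊗ₜ[k] d) * (G (b ⊗ₜ[k] e) * K (c ⊗ₜ[k] f)) := by
  simp [theta']

theorem theta_bridge (F G K : H ⊗[k] H →ₗ[k] A) :
    theta F G K = (theta' F G K) ∘ₗ
      (TensorProduct.map (TensorProduct.assoc k H H H).toLinearMap
        (TensorProduct.assoc k H H H).toLinearMap) := by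
  ext a b c d e f
  simp [theta, theta', mul_assoc]

theorem sum4_reorder {M : Type*} [AddCommMonoid M] {n m : ℕ} {px : Fin n → ℕ}
    {pu : Fin m → ℕ} (t : (i : Fin n) → (j : Fin m) → Fin (px i) → Fin (pu j) → M) :
    ∑ i, ∑ j, ∑ p, ∑ q, t i j p q = ∑ j, ∑ q, ∑ i, ∑ p, t i j p q := by
  rw [Finset.sum_comm]
  refine Finset.sum_congr rfl fun j _ => ?_
  calc ∑ i, ∑ p, ∑ q, t i j p q = ∑ i, ∑ q, ∑ p, t i j p q :=
        Finset.sum_congr rfl fun i _ => Finset.sum_comm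
    _ = ∑ q, ∑ i, ∑ p, t i j p q := Finset.sum_comm

theorem conv_assoc (W : WeakHopfData k H)
    (hco : ∀ h : H, (TensorProduct.assoc k H H H)
        ((LinearMap.rTensor H W.Δ) (W.Δ h)) = (LinearMap.lTensor H W.Δ) (W.Δ h))
    (F G K : H ⊗[k] H →ₗ[k] A) :
    conv W (conv W F G) K = conv W F (conv W G K) := by
  apply TensorProduct.ext'
  intro h g
  obtain ⟨n, x, y, hh⟩ := exists_rep (W.Δ h)
  obtain ⟨m, u, v, hg⟩ := exists_rep (W.Δ g)
  choose px x1 x2 hx using fun i => exists_rep (W.Δ (x i))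
  choose py y1 y2 hy using fun i => exists_rep (W.Δ (y i))
  choose pu u1 u2 hu using fun j => exists_rep (W.Δ (u j))
  choose pv v1 v2 hv using fun j => exists_rep (W.Δ (v j))
  have hDLh : LinearMap.rTensor H W.Δ (W.Δ h) =
      ∑ i, ∑ p, (x1 i p ⊗ₜ[k] x2 i p) ⊗ₜ[k] y i := by
    rw [hh, map_sum]
    refine Finset.sum_congr rfl fun i _ => ?_
    rw [LinearMap.rTensor_tmul, hx i, TensorProduct.sum_tmul]
  have hDLg : LinearMap.rTensor H W.Δ (W.Δ g) =
      ∑ j, ∑ q, (u1 j q ⊗ₜ[k] u2 j q) ⊗ₜ[k] v j := by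
    rw [hg, map_sum]
    refine Finset.sum_congr rfl fun j _ => ?_
    rw [LinearMap.rTensor_tmul, hu j, TensorProduct.sum_tmul]
  have hDRh : LinearMap.lTensor H W.Δ (W.Δ h) =
      ∑ i, ∑ p, x i ⊗ₜ[k] (y1 i p ⊗ₜ[k] y2 i p) := by
    rw [hh, map_sum]
    refine Finset.sum_congr rfl fun i _ => ?_
    rw [LinearMap.lTensor_tmul, hy i, TensorProduct.tmul_sum]
  have hDRg : LinearMap.lTensor H W.Δ (W.Δ g) =
      ∑ j, ∑ q, u j ⊗ₜ[k] (v1 j q ⊗ₜ[k] v2 j q) := by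
    rw [hg, map_sum]
    refine Finset.sum_congr rfl fun j _ => ?_
    rw [LinearMap.lTensor_tmul, hv j, TensorProduct.tmul_sum]
  have e1 : conv W (conv W F G) K (h ⊗ₜ[k] g) =
      theta F G K ((LinearMap.rTensor H W.Δ (W.Δ h)) ⊗ₜ[k]
        (LinearMap.rTensor H W.Δ (W.Δ g))) := by
    rw [conv_tmul W _ K h g hh hg]
    have step : ∀ i j, conv W F G (x i ⊗ₜ[k] u j) * K (y i ⊗ₜ[k] v j) =
        ∑ p, ∑ q, F (x1 i p ⊗ₜ[k] u1 j q) * G (x2 i p ⊗ₜ[k] u2 j q) *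
          K (y i ⊗ₜ[k] v j) := by
      intro i j
      rw [conv_tmul W F G _ _ (hx i) (hu j), Finset.sum_mul]
      exact Finset.sum_congr rfl fun p _ => Finset.sum_mul _ _ _
    calc ∑ i, ∑ j, conv W F G (x i ⊗ₜ[k] u j) * K (y i ⊗ₜ[k] v j)
        = ∑ i, ∑ j, ∑ p, ∑ q, F (x1 i p ⊗ₜ[k] u1 j q) * G (x2 i p ⊗ₜ[k] u2 j q) *
            K (y i ⊗ₜ[k] v j) :=
          Finset.sum_congr rfl fun i _ => Finset.sum_congr rfl fun j _ => step i j
      _ = ∑ j, ∑ q, ∑ i, ∑ p, F (x1 i p ⊗ₜ[k] u1 j q) * G (x2 i p ⊗ₜ[k] u2 j q) *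
            K (y i ⊗ₜ[k] v j) := sum4_reorder _
      _ = theta F G K ((LinearMap.rTensor H W.Δ (W.Δ h)) ⊗ₜ[k]
            (LinearMap.rTensor H W.Δ (W.Δ g))) := by
          rw [hDLh, hDLg]
          simp only [TensorProduct.sum_tmul, TensorProduct.tmul_sum, map_sum,
            theta_tmul]
  have e2 : conv W F (conv W G K) (h ⊗ₜ[k] g) =
      theta' F G K ((LinearMap.lTensor H W.Δ (W.Δ h)) ⊗ₜ[k]
        (LinearMap.lTensor H W.Δ (W.Δ g))) := by
    rw [conv_tmul W F _ h g hh hg]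
    have step : ∀ i j, F (x i ⊗ₜ[k] u j) * conv W G K (y i ⊗ₜ[k] v j) =
        ∑ p, ∑ q, F (x i ⊗ₜ[k] u j) *
          (G (y1 i p ⊗ₜ[k] v1 j q) * K (y2 i p ⊗ₜ[k] v2 j q)) := by
      intro i j
      rw [conv_tmul W G K _ _ (hy i) (hv j), Finset.mul_sum]
      exact Finset.sum_congr rfl fun p _ => Finset.mul_sum _ _ _
    calc ∑ i, ∑ j, F (x i ⊗ₜ[k] u j) * conv W G K (y i ⊗ₜ[k] v j)
        = ∑ i, ∑ j, ∑ p, ∑ q, F (x i ⊗ₜ[k] u j) *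
            (G (y1 i p ⊗ₜ[k] v1 j q) * K (y2 i p ⊗ₜ[k] v2 j q)) :=
          Finset.sum_congr rfl fun i _ => Finset.sum_congr rfl fun j _ => step i j
      _ = ∑ j, ∑ q, ∑ i, ∑ p, F (x i ⊗ₜ[k] u j) *
            (G (y1 i p ⊗ₜ[k] v1 j q) * K (y2 i p ⊗ₜ[k] v2 j q)) := sum4_reorder _
      _ = theta' F G K ((LinearMap.lTensor H W.Δ (W.Δ h)) ⊗ₜ[k]
            (LinearMap.lTensor H W.Δ (W.Δ g))) := by
          rw [hDRh, hDRg]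
          simp only [TensorProduct.sum_tmul, TensorProduct.tmul_sum, map_sum,
            theta'_tmul]
  rw [e1, e2, theta_bridge, ← hco h, ← hco g]
  simp

/-- The bilinear map `(h,g) ↦ ρ(hg)·1`. -/
noncomputable def Emap (ρ : H →ₗ[k] A →ₗ[k] A) : H ⊗[k] H →ₗ[k] A :=
  (ρ.flip 1) ∘ₗ LinearMap.mul' k H

theorem Emap_tmul (ρ : H →ₗ[k] A →ₗ[k] A) (h g : H) :
    Emap ρ (h ⊗ₜ[k] g) = ρ (h * g) 1 := by
  simp [Emap]

/-- The bilinear map `(h,g) ↦ h·(g·1)`. -/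
noncomputable def fmap (ρ : H →ₗ[k] A →ₗ[k] A) : H ⊗[k] H →ₗ[k] A :=
  TensorProduct.lift (LinearMap.mk₂ k (fun h g => ρ h (ρ g 1))
    (by intros; simp) (by intros; simp) (by intros; simp) (by intros; simp))

theorem fmap_tmul (ρ : H →ₗ[k] A →ₗ[k] A) (h g : H) :
    fmap ρ (h ⊗ₜ[k] g) = ρ h (ρ g 1) := by
  simp [fmap]

end UniquenessAux

/-- the inverse of `σ` (conditions (13)–(16)) is unique. -/
theorem statement4 {k H A : Type*} [Field k] [Ring H] [Algebra k H] [Ring A] [Algebra k A]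
    (W : WeakHopfData k H) (hW : IsWeakHopf W) (ρ : H →ₗ[k] A →ₗ[k] A)
    (h1 : cond1 W ρ) (h2 : cond2 W ρ) (h3 : cond3 W ρ) (h4 : cond4 ρ)
    (σb : H →ₗ[k] H →ₗ[k] A) (hbal : HRBalanced W (fun h g => σb h g))
    (σc : H →ₗ[k] H →ₗ[k] A) (hbalc : HLBalanced W (fun h g => σc h g))
    (hc13 : cond13 W ρ (fun h g => σc h g)) (hc14 : cond14 W ρ (fun h g => σc h g))
    (hc15 : cond15 W ρ (fun h g => σc h g))
    (hc16 : cond16 W ρ (fun h g => σb h g) (fun h g => σc h g))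
    (σd : H →ₗ[k] H →ₗ[k] A) (hbald : HLBalanced W (fun h g => σd h g))
    (hd13 : cond13 W ρ (fun h g => σd h g)) (hd14 : cond14 W ρ (fun h g => σd h g))
    (hd15 : cond15 W ρ (fun h g => σd h g))
    (hd16 : cond16 W ρ (fun h g => σb h g) (fun h g => σd h g)) :
    σc = σd := by
  classical
  set Fb := TensorProduct.lift σb with hFb
  set Fc := TensorProduct.lift σc with hFc
  set Fd := TensorProduct.lift σd with hFd
  have key13c : conv W (Emap ρ) Fc = Fc := by
    apply TensorProduct.ext'
    intro h g
    obtain ⟨n, x, y, hh⟩ := exists_rep (W.Δ h)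
    obtain ⟨m, u, v, hg⟩ := exists_rep (W.Δ g)
    rw [conv_tmul W _ _ h g hh hg]
    have := hc13 h g n x y m u v hh hg
    simp only [hFc, TensorProduct.lift.tmul, Emap_tmul]
    exact this.symm
  have key13d : conv W (Emap ρ) Fd = Fd := by
    apply TensorProduct.ext'
    intro h g
    obtain ⟨n, x, y, hh⟩ := exists_rep (W.Δ h)
    obtain ⟨m, u, v, hg⟩ := exists_rep (W.Δ g)
    rw [conv_tmul W _ _ h g hh hg]
    have := hd13 h g n x y m u v hh hg
    simp only [hFd, TensorProduct.lift.tmul, Emap_tmul]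
    exact this.symm
  have key16c1 : conv W Fb Fc = fmap ρ := by
    apply TensorProduct.ext'
    intro h g
    obtain ⟨n, x, y, hh⟩ := exists_rep (W.Δ h)
    obtain ⟨m, u, v, hg⟩ := exists_rep (W.Δ g)
    rw [conv_tmul W _ _ h g hh hg, fmap_tmul]
    have := (hc16 h g n x y m u v hh hg).1
    simpa only [hFb, hFc, TensorProduct.lift.tmul] using this
  have key16c2 : conv W Fc Fb = Emap ρ := by
    apply TensorProduct.ext'
    intro h g
    obtain ⟨n, x, y, hh⟩ := exists_rep (W.Δ h)
    obtain ⟨m, u, v, hg⟩ := exists_rep (W.Δ g)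
    rw [conv_tmul W _ _ h g hh hg, Emap_tmul]
    have := (hc16 h g n x y m u v hh hg).2
    simpa only [hFb, hFc, TensorProduct.lift.tmul] using this
  have key16d1 : conv W Fb Fd = fmap ρ := by
    apply TensorProduct.ext'
    intro h g
    obtain ⟨n, x, y, hh⟩ := exists_rep (W.Δ h)
    obtain ⟨m, u, v, hg⟩ := exists_rep (W.Δ g)
    rw [conv_tmul W _ _ h g hh hg, fmap_tmul]
    have := (hd16 h g n x y m u v hh hg).1
    simpa only [hFb, hFd, TensorProduct.lift.tmul] using this
  have key16d2 : conv W Fd Fb = Emap ρ := by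
    apply TensorProduct.ext'
    intro h g
    obtain ⟨n, x, y, hh⟩ := exists_rep (W.Δ h)
    obtain ⟨m, u, v, hg⟩ := exists_rep (W.Δ g)
    rw [conv_tmul W _ _ h g hh hg, Emap_tmul]
    have := (hd16 h g n x y m u v hh hg).2
    simpa only [hFb, hFd, TensorProduct.lift.tmul] using this
  have keyff : conv W (fmap ρ) (fmap ρ) = fmap ρ := by
    apply TensorProduct.ext'
    intro h g
    obtain ⟨n, x, y, hh⟩ := exists_rep (W.Δ h)
    obtain ⟨m, u, v, hg⟩ := exists_rep (W.Δ g)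
    rw [conv_tmul W _ _ h g hh hg, fmap_tmul]
    simp only [fmap_tmul]
    rw [Finset.sum_comm]
    calc ∑ j, ∑ i, ρ (x i) (ρ (u j) 1) * ρ (y i) (ρ (v j) 1)
        = ∑ j, ρ h ((ρ (u j) 1) * (ρ (v j) 1)) :=
          Finset.sum_congr rfl fun j _ => (h2 h _ _ n x y hh).symm
      _ = ρ h (∑ j, (ρ (u j) 1) * (ρ (v j) 1)) := (map_sum (ρ h) _ _).symm
      _ = ρ h (ρ g 1) := by
          rw [← h2 g 1 1 m u v hg, mul_one]
  have assoc := conv_assoc W hW.coassoc (A := A)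
  have A1 : Fc = conv W Fd (fmap ρ) := by
    calc Fc = conv W (Emap ρ) Fc := key13c.symm
      _ = conv W (conv W Fd Fb) Fc := by rw [key16d2]
      _ = conv W Fd (conv W Fb Fc) := assoc _ _ _
      _ = conv W Fd (fmap ρ) := by rw [key16c1]
  have A2 : Fd = conv W Fc (fmap ρ) := by
    calc Fd = conv W (Emap ρ) Fd := key13d.symm
      _ = conv W (conv W Fc Fb) Fd := by rw [key16c2]
      _ = conv W Fc (conv W Fb Fd) := assoc _ _ _
      _ = conv W Fc (fmap ρ) := by rw [key16d1]
  have main : Fc = Fd := by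
    calc Fc = conv W Fd (fmap ρ) := A1
      _ = conv W (conv W Fc (fmap ρ)) (fmap ρ) := by rw [← A2]
      _ = conv W Fc (conv W (fmap ρ) (fmap ρ)) := assoc _ _ _
      _ = conv W Fc (fmap ρ) := by rw [keyff]
      _ = Fd := A2.symm
  ext h g
  have h' := congrArg (fun F => F (h ⊗ₜ[k] g)) main
  simpa [hFc, hFd] using h'
end
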